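/- (Theorem: subsystem code distance for lattice-surgery merging.) In the merging subsystem code setting, the dressed distance is at least min(d_A, d_B): every pair (v_X, v_Z) ∈ F₂^M × F₂^M satisfying ⟨v_X, z⟩ = 0 for all z ∈ S_Z and ⟨v_Z, x⟩ = 0 for all x ∈ S_X, and such that not both v_X ∈ 𝒢_X and v_Z ∈ 𝒢_Z, has weight #{q ∈ M : v_X(q) ≠ 0 or v_Z(q) ≠ 0} ≥ min(d_A, d_B). -/

import Mathlib

/-- Hamming weight of a vector over `ZMod 2`. -/
def wt {ι : Type} [Fintype ι] (v : ι → ZMod 2) : ℕ :=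
  (Finset.univ.filter fun i => v i ≠ 0).card

/-- The standard bilinear form `⟨u, v⟩ = Σ_q u_q v_q` over `ZMod 2`. -/
def bform {ι : Type} [Fintype ι] (u v : ι → ZMod 2) : ZMod 2 := ∑ i, u i * v i

/-- The `F₂`-row space of a matrix. -/
def rowSpan {m n : Type} [Fintype m] [Fintype n] (H : Matrix m n (ZMod 2)) :
    Submodule (ZMod 2) (n → ZMod 2) :=
  Submodule.span (ZMod 2) (Set.range fun i => fun j => H i j)

/-- The qubit set `M = A ⊔ C ⊔ T` of the merged patch, where `C = VV ⊔ CC` is the qubit set of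
the ancilla patch (`VV = [m_A] × [m_B]`, `CC = [r_Ā] × [r_B̄]`) and `T ≅ [r_Ā]` is the set of
interface qubits. -/
abbrev MQ (A : Type) (mA mB rA' rB' : ℕ) : Type :=
  A ⊕ (Fin mA × Fin mB) ⊕ (Fin rA' × Fin rB') ⊕ Fin rA'

/-- A vector supported on `A`, viewed in `F₂^M`. -/
def onA {A : Type} {mA mB rA' rB' : ℕ} (row : A → ZMod 2) : MQ A mA mB rA' rB' → ZMod 2
  | Sum.inl a => row a
  | _ => 0

/-- The `X`-check `s^X_{i,j}` of the ancilla patch `C` (the hypergraph product of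
`(H_Ā, H_B̄)`), viewed as a vector on `M`. -/
def sXC {A : Type} {mA mB rA' rB' : ℕ} (HAbar : Matrix (Fin rA') (Fin mA) (ZMod 2))
    (HBbar : Matrix (Fin rB') (Fin mB) (ZMod 2)) (i : Fin mA) (j : Fin rB') :
    MQ A mA mB rA' rB' → ZMod 2
  | Sum.inr (Sum.inl (k, l)) => if k = i then HBbar j l else 0
  | Sum.inr (Sum.inr (Sum.inl (k, l))) => if l = j then HAbar k i else 0
  | _ => 0

/-- The `Z`-check `s^Z_{i,j}` of the ancilla patch `C`, viewed as a vector on `M`. -/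
def sZC {A : Type} {mA mB rA' rB' : ℕ} (HAbar : Matrix (Fin rA') (Fin mA) (ZMod 2))
    (HBbar : Matrix (Fin rB') (Fin mB) (ZMod 2)) (i : Fin rA') (j : Fin mB) :
    MQ A mA mB rA' rB' → ZMod 2
  | Sum.inr (Sum.inl (k, l)) => if l = j then HAbar i k else 0
  | Sum.inr (Sum.inr (Sum.inl (k, l))) => if k = i then HBbar l j else 0
  | _ => 0

/-- The standard basis vector at interface qubit `T(i)`. -/
def eT {A : Type} {mA mB rA' rB' : ℕ} (i : Fin rA') : MQ A mA mB rA' rB' → ZMod 2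
  | Sum.inr (Sum.inr (Sum.inr j)) => if j = i then 1 else 0
  | _ => 0

/-- The standard basis vector at the `VV` qubit `(k, l)`. -/
def eVV {A : Type} {mA mB rA' rB' : ℕ} (k : Fin mA) (l : Fin mB) :
    MQ A mA mB rA' rB' → ZMod 2
  | Sum.inr (Sum.inl (k', l')) => if k' = k ∧ l' = l then 1 else 0
  | _ => 0

/-- The standard basis vector at the `A` qubit `a`. -/
def eA {A : Type} [DecidableEq A] {mA mB rA' rB' : ℕ} (a : A) :
    MQ A mA mB rA' rB' → ZMod 2
  | Sum.inl a' => if a' = a then 1 else 0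
  | _ => 0

/-- The merged-patch `X`-type stabilizer generator
`S^X_{T,i} = e_{ι_Ā(i)} + e_{VV(i,ℓ)} + Σ_j H_Ā[j,i] e_{T(j)}`. -/
def SXT {A : Type} [DecidableEq A] {mA mB rA' rB' : ℕ}
    (HAbar : Matrix (Fin rA') (Fin mA) (ZMod 2)) (ιA : Fin mA → A) (ℓ : Fin mB) (i : Fin mA) :
    MQ A mA mB rA' rB' → ZMod 2 :=
  eA (ιA i) + eVV i ℓ + ∑ j, HAbar j i • eT j

/-- The indicator of the column `{VV(i,ℓ)}_{i ∈ [m_A]}` of the ancilla patch, i.e. the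
logical `X̄_C`, viewed in `F₂^M`. -/
def XbarC {A : Type} {mA mB rA' rB' : ℕ} (ℓ : Fin mB) : MQ A mA mB rA' rB' → ZMod 2
  | Sum.inr (Sum.inl (_, l)) => if l = ℓ then 1 else 0
  | _ => 0


/-- The `X`-part `𝒢_X` of the gauge group of the merging subsystem code: the span of the rows
of `H_X^A`, the rows of `H_X^C`, and the `S^X_{T,i}`. -/
def GXgauge {A : Type} [Fintype A] [DecidableEq A] {rXA mA mB rA' rB' : ℕ}
    (HXA : Matrix (Fin rXA) A (ZMod 2))
    (HAbar : Matrix (Fin rA') (Fin mA) (ZMod 2)) (HBbar : Matrix (Fin rB') (Fin mB) (ZMod 2))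
    (ιA : Fin mA → A) (ℓ : Fin mB) :
    Submodule (ZMod 2) (MQ A mA mB rA' rB' → ZMod 2) :=
  Submodule.span (ZMod 2)
    ((Set.range fun i : Fin rXA => (onA (HXA i) : MQ A mA mB rA' rB' → ZMod 2)) ∪
      (Set.range fun p : Fin mA × Fin rB' => sXC HAbar HBbar p.1 p.2) ∪
      (Set.range (SXT HAbar ιA ℓ)))

/-- The `Z`-part `𝒢_Z` of the gauge group of the merging subsystem code: the span of the rows
of `H_Z^A`, the rows of `H_Z^C`, the `z^A_i + e_{T(i)}`, the `s^Z_{i,ℓ} + e_{T(i)}`, and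
`z̄_A`. -/
def GZgauge {A : Type} [Fintype A] [DecidableEq A] {rZA mA mB rA' rB' : ℕ}
    (HZA : Matrix (Fin rZA) A (ZMod 2))
    (HAbar : Matrix (Fin rA') (Fin mA) (ZMod 2)) (HBbar : Matrix (Fin rB') (Fin mB) (ZMod 2))
    (ρ : Fin rA' → Fin rZA) (ℓ : Fin mB) (zA0 : A → ZMod 2) :
    Submodule (ZMod 2) (MQ A mA mB rA' rB' → ZMod 2) :=
  Submodule.span (ZMod 2)
    ((Set.range fun i : Fin rZA => (onA (HZA i) : MQ A mA mB rA' rB' → ZMod 2)) ∪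
      (Set.range fun p : Fin rA' × Fin mB => sZC HAbar HBbar p.1 p.2) ∪
      (Set.range fun i : Fin rA' => onA (HZA (ρ i)) + eT i) ∪
      (Set.range fun i : Fin rA' => sZC HAbar HBbar i ℓ + eT i) ∪
      {onA zA0})

/-- The `X`-part of the stabilizer group of the merging subsystem code:
`S_X = {x ∈ 𝒢_X : ⟨x, z⟩ = 0 for all z ∈ 𝒢_Z}`. -/
def SXstab {A : Type} [Fintype A] [DecidableEq A] {rXA rZA mA mB rA' rB' : ℕ}
    (HXA : Matrix (Fin rXA) A (ZMod 2)) (HZA : Matrix (Fin rZA) A (ZMod 2))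
    (HAbar : Matrix (Fin rA') (Fin mA) (ZMod 2)) (HBbar : Matrix (Fin rB') (Fin mB) (ZMod 2))
    (ιA : Fin mA → A) (ρ : Fin rA' → Fin rZA) (ℓ : Fin mB) (zA0 : A → ZMod 2) :
    Set (MQ A mA mB rA' rB' → ZMod 2) :=
  {x | x ∈ GXgauge HXA HAbar HBbar ιA ℓ ∧
    ∀ z ∈ GZgauge HZA HAbar HBbar ρ ℓ zA0, bform x z = 0}

/-- The `Z`-part of the stabilizer group of the merging subsystem code:
`S_Z = {z ∈ 𝒢_Z : ⟨z, x⟩ = 0 for all x ∈ 𝒢_X}`. -/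
def SZstab {A : Type} [Fintype A] [DecidableEq A] {rXA rZA mA mB rA' rB' : ℕ}
    (HXA : Matrix (Fin rXA) A (ZMod 2)) (HZA : Matrix (Fin rZA) A (ZMod 2))
    (HAbar : Matrix (Fin rA') (Fin mA) (ZMod 2)) (HBbar : Matrix (Fin rB') (Fin mB) (ZMod 2))
    (ιA : Fin mA → A) (ρ : Fin rA' → Fin rZA) (ℓ : Fin mB) (zA0 : A → ZMod 2) :
    Set (MQ A mA mB rA' rB' → ZMod 2) :=
  {z | z ∈ GZgauge HZA HAbar HBbar ρ ℓ zA0 ∧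
    ∀ x ∈ GXgauge HXA HAbar HBbar ιA ℓ, bform z x = 0}

section Aux
set_option linter.unusedSectionVars false

open Sum Finset

lemma z2_add_self (x : ZMod 2) : x + x = 0 := by revert x; decide

lemma z2_cases (c : ZMod 2) : c = 0 ∨ c = 1 := by revert c; decide

lemma bform_add_right {ι : Type} [Fintype ι] (u v w : ι → ZMod 2) :
    bform u (v + w) = bform u v + bform u w := by
  simp [bform, mul_add, Finset.sum_add_distrib]

lemma bform_comm {ι : Type} [Fintype ι] (u v : ι → ZMod 2) : bform u v = bform v u := by
  simp [bform, mul_comm]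

/-- `bform u ·` as a linear map. -/
def bformL {ι : Type} [Fintype ι] (u : ι → ZMod 2) : (ι → ZMod 2) →ₗ[ZMod 2] ZMod 2 where
  toFun v := bform u v
  map_add' v w := bform_add_right u v w
  map_smul' c v := by
    simp [bform, Finset.mul_sum, mul_left_comm]

lemma bform_smul_right {ι : Type} [Fintype ι] (u v : ι → ZMod 2) (c : ZMod 2) :
    bform u (c • v) = c * bform u v := (bformL u).map_smul c v

lemma bform_sum_right {ι κ : Type} [Fintype ι] [Fintype κ] (u : ι → ZMod 2)
    (f : κ → ι → ZMod 2) : bform u (∑ k, f k) = ∑ k, bform u (f k) :=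
  map_sum (bformL u) f Finset.univ

lemma bform_zero_of_span {ι : Type} [Fintype ι] {S : Set (ι → ZMod 2)} {u : ι → ZMod 2}
    (h : ∀ g ∈ S, bform u g = 0) : ∀ x ∈ Submodule.span (ZMod 2) S, bform u x = 0 := by
  intro x hx
  have hS : S ⊆ (LinearMap.ker (bformL u) : Set _) := fun g hg => h g hg
  have := Submodule.span_le.mpr hS hx
  exact this

section eval

variable {A : Type} [Fintype A] [DecidableEq A] {mA mB rA' rB' : ℕ}
  (v : MQ A mA mB rA' rB' → ZMod 2)
  (HAbar : Matrix (Fin rA') (Fin mA) (ZMod 2)) (HBbar : Matrix (Fin rB') (Fin mB) (ZMod 2))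

lemma bform_MQ (u : MQ A mA mB rA' rB' → ZMod 2) :
    bform v u = (∑ a, v (inl a) * u (inl a))
      + (∑ p : Fin mA × Fin mB, v (inr (inl p)) * u (inr (inl p)))
      + (∑ p : Fin rA' × Fin rB', v (inr (inr (inl p))) * u (inr (inr (inl p))))
      + (∑ i : Fin rA', v (inr (inr (inr i))) * u (inr (inr (inr i)))) := by
  simp [bform, Fintype.sum_sum_type, add_assoc]

lemma bform_onA (r : A → ZMod 2) : bform v (onA r) = ∑ a, v (inl a) * r a := by
  simp [bform_MQ, onA]

lemma bform_eA (a : A) : bform v (eA a) = v (inl a) := by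
  simp [bform_MQ, eA, mul_ite]

lemma bform_eT (i : Fin rA') : bform v (eT i) = v (inr (inr (inr i))) := by
  simp [bform_MQ, eT, mul_ite]

lemma bform_eVV (k : Fin mA) (l : Fin mB) : bform v (eVV k l) = v (inr (inl (k, l))) := by
  simp [bform_MQ, eVV, mul_ite, Fintype.sum_prod_type, ite_and]

lemma bform_sZC (i : Fin rA') (j : Fin mB) :
    bform v (sZC HAbar HBbar i j)
      = (∑ k, v (inr (inl (k, j))) * HAbar i k)
        + (∑ l, v (inr (inr (inl (i, l)))) * HBbar l j) := by
  simp [bform_MQ, sZC, Fintype.sum_prod_type, mul_ite]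

lemma bform_sXC (i : Fin mA) (j : Fin rB') :
    bform v (sXC HAbar HBbar i j)
      = (∑ l, v (inr (inl (i, l))) * HBbar j l)
        + (∑ k, v (inr (inr (inl (k, j)))) * HAbar k i) := by
  simp [bform_MQ, sXC, Fintype.sum_prod_type, mul_ite]

lemma bform_SXT (ιA : Fin mA → A) (ℓ : Fin mB) (i : Fin mA) :
    bform v (SXT HAbar ιA ℓ i)
      = v (inl (ιA i)) + v (inr (inl (i, ℓ))) + ∑ j, HAbar j i * v (inr (inr (inr j))) := by
  simp only [SXT, bform_add_right, bform_sum_right, bform_smul_right, bform_eA, bform_eVV,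
    bform_eT]

end eval
end Aux

lemma z2_cancel {x y : ZMod 2} (h : x + y = 0) : x = y := by
  have h2 : x + y + y = 0 + y := by rw [h]
  rwa [add_assoc, z2_add_self, add_zero, zero_add] at h2

lemma z2_aba (x y : ZMod 2) : x + y + x = y := by
  rw [add_comm x y, add_assoc, z2_add_self, add_zero]

lemma z2_helper1 (x y : ZMod 2) : x + (y + x) = y := by
  rw [add_comm y x, ← add_assoc, z2_add_self, zero_add]
section Stab
set_option linter.unusedSectionVars false
open Sum Finset

lemma bform_add_left {ι : Type} [Fintype ι] (u v w : ι → ZMod 2) :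
    bform (u + v) w = bform u w + bform v w := by
  rw [bform_comm, bform_add_right, bform_comm u w, bform_comm w v]

variable {A : Type} [Fintype A] [DecidableEq A] {rXA rZA mA mB rA' rB' : ℕ}
  (HXA : Matrix (Fin rXA) A (ZMod 2)) (HZA : Matrix (Fin rZA) A (ZMod 2))
  (HAbar : Matrix (Fin rA') (Fin mA) (ZMod 2)) (HBbar : Matrix (Fin rB') (Fin mB) (ZMod 2))
  (ιA : Fin mA → A) (ρ : Fin rA' → Fin rZA) (ℓ : Fin mB) (zA0 : A → ZMod 2)

lemma orth_GX {u : MQ A mA mB rA' rB' → ZMod 2}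
    (h1 : ∀ r, bform u (onA (HXA r)) = 0)
    (h2 : ∀ p : Fin mA × Fin rB', bform u (sXC HAbar HBbar p.1 p.2) = 0)
    (h3 : ∀ i, bform u (SXT HAbar ιA ℓ i) = 0) :
    ∀ x ∈ GXgauge HXA HAbar HBbar ιA ℓ, bform u x = 0 := by
  apply bform_zero_of_span
  rintro g ((⟨r, rfl⟩ | ⟨p, rfl⟩) | ⟨i, rfl⟩)
  · exact h1 r
  · exact h2 p
  · exact h3 i

lemma orth_GZ {u : MQ A mA mB rA' rB' → ZMod 2}
    (h1 : ∀ r, bform u (onA (HZA r)) = 0)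
    (h2 : ∀ p : Fin rA' × Fin mB, bform u (sZC HAbar HBbar p.1 p.2) = 0)
    (h3 : ∀ i : Fin rA', bform u (onA (HZA (ρ i)) + eT i) = 0)
    (h4 : ∀ i : Fin rA', bform u (sZC HAbar HBbar i ℓ + eT i) = 0)
    (h5 : bform u (onA zA0) = 0) :
    ∀ z ∈ GZgauge HZA HAbar HBbar ρ ℓ zA0, bform u z = 0 := by
  apply bform_zero_of_span
  rintro g ((((⟨r, rfl⟩ | ⟨p, rfl⟩) | ⟨i, rfl⟩) | ⟨i, rfl⟩) | rfl)
  · exact h1 r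
  · exact h2 p
  · exact h3 i
  · exact h4 i
  · exact h5

-- membership of generators
lemma mem_GX₁ (r : Fin rXA) : onA (HXA r) ∈ GXgauge HXA HAbar HBbar ιA ℓ :=
  Submodule.subset_span (by left; left; exact ⟨r, rfl⟩)

lemma mem_GX₂ (i : Fin mA) (j : Fin rB') : sXC HAbar HBbar i j ∈ GXgauge HXA HAbar HBbar ιA ℓ :=
  Submodule.subset_span (by left; right; exact ⟨(i, j), rfl⟩)

lemma mem_GX₃ (i : Fin mA) : SXT HAbar ιA ℓ i ∈ GXgauge HXA HAbar HBbar ιA ℓ :=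
  Submodule.subset_span (by right; exact ⟨i, rfl⟩)

lemma mem_GZ₁ (r : Fin rZA) : onA (HZA r) ∈ GZgauge HZA HAbar HBbar ρ ℓ zA0 :=
  Submodule.subset_span (by left; left; left; left; exact ⟨r, rfl⟩)

lemma mem_GZ₂ (i : Fin rA') (j : Fin mB) :
    sZC HAbar HBbar i j ∈ GZgauge HZA HAbar HBbar ρ ℓ zA0 :=
  Submodule.subset_span (by left; left; left; right; exact ⟨(i, j), rfl⟩)

lemma mem_GZ₃ (i : Fin rA') :
    onA (HZA (ρ i)) + eT i ∈ GZgauge HZA HAbar HBbar ρ ℓ zA0 :=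
  Submodule.subset_span (by left; left; right; exact ⟨i, rfl⟩)

lemma mem_GZ₄ (i : Fin rA') :
    sZC HAbar HBbar i ℓ + eT i ∈ GZgauge HZA HAbar HBbar ρ ℓ zA0 :=
  Submodule.subset_span (by left; right; exact ⟨i, rfl⟩)

lemma mem_GZ₅ : onA zA0 ∈ GZgauge HZA HAbar HBbar ρ ℓ zA0 :=
  Submodule.subset_span (by right; rfl)

lemma mem_GZ_eT (i : Fin rA') : (eT i : MQ A mA mB rA' rB' → ZMod 2) ∈
    GZgauge HZA HAbar HBbar ρ ℓ zA0 := by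
  have h := Submodule.add_mem _ (mem_GZ₃ HZA HAbar HBbar ρ ℓ zA0 i)
    (mem_GZ₁ HZA HAbar HBbar ρ ℓ zA0 (ρ i))
  have : onA (HZA (ρ i)) + eT i + onA (HZA (ρ i)) = (eT i : MQ A mA mB rA' rB' → ZMod 2) := by
    funext q
    simp only [Pi.add_apply]
    rw [add_comm (onA (HZA (ρ i)) q), add_assoc, z2_add_self, add_zero]
  rwa [this] at h

-- atomic orthogonality computations
lemma orthA (hOrthA : HXA * HZA.transpose = 0) (r : Fin rXA) (j : Fin rZA) :
    ∑ a, HZA j a * HXA r a = 0 := by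
  have := congrFun (congrFun hOrthA r) j
  simpa [Matrix.mul_apply, mul_comm] using this

lemma bform_onAZ_onAX (hOrthA : HXA * HZA.transpose = 0) (j : Fin rZA) (r : Fin rXA) :
    bform (onA (HZA j) : MQ A mA mB rA' rB' → ZMod 2) (onA (HXA r)) = 0 := by
  rw [bform_onA]
  simpa [onA] using orthA HXA HZA hOrthA r j

lemma bform_onA_sXC (w : A → ZMod 2) (i : Fin mA) (j : Fin rB') :
    bform (onA w : MQ A mA mB rA' rB' → ZMod 2) (sXC HAbar HBbar i j) = 0 := by
  rw [bform_sXC]; simp [onA]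

lemma bform_onA_SXT (w : A → ZMod 2) (i : Fin mA) :
    bform (onA w : MQ A mA mB rA' rB' → ZMod 2) (SXT HAbar ιA ℓ i) = w (ιA i) := by
  rw [bform_SXT]; simp [onA]

lemma bform_onA_eT (w : A → ZMod 2) (i : Fin rA') :
    bform (onA w : MQ A mA mB rA' rB' → ZMod 2) (eT i) = 0 := by
  rw [bform_eT]; simp [onA]

lemma bform_eT_SXT (i : Fin rA') (k : Fin mA) :
    bform (eT i : MQ A mA mB rA' rB' → ZMod 2) (SXT HAbar ιA ℓ k) = HAbar i k := by
  rw [bform_SXT]; simp [eT]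

lemma bform_eT_onA (i : Fin rA') (w : A → ZMod 2) :
    bform (eT i : MQ A mA mB rA' rB' → ZMod 2) (onA w) = 0 := by
  rw [bform_onA]; simp [eT]

lemma bform_eT_sXC (i : Fin rA') (k : Fin mA) (j : Fin rB') :
    bform (eT i : MQ A mA mB rA' rB' → ZMod 2) (sXC HAbar HBbar k j) = 0 := by
  rw [bform_sXC]; simp [eT]

lemma bform_eT_sZC (i : Fin rA') (k : Fin rA') (j : Fin mB) :
    bform (eT i : MQ A mA mB rA' rB' → ZMod 2) (sZC HAbar HBbar k j) = 0 := by
  rw [bform_sZC]; simp [eT]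

lemma bform_sZC_onA (i : Fin rA') (j : Fin mB) (w : A → ZMod 2) :
    bform (sZC HAbar HBbar i j : MQ A mA mB rA' rB' → ZMod 2) (onA w) = 0 := by
  rw [bform_onA]; simp [sZC]

lemma bform_sZC_sXC (i : Fin rA') (j : Fin mB) (k : Fin mA) (m : Fin rB') :
    bform (sZC HAbar HBbar i j : MQ A mA mB rA' rB' → ZMod 2) (sXC HAbar HBbar k m) = 0 := by
  rw [bform_sXC]
  simp only [sZC, ite_mul, zero_mul, Finset.sum_ite_eq, Finset.sum_ite_eq',
    Finset.mem_univ, if_true]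
  rw [mul_comm]
  exact z2_add_self _

lemma bform_sZC_SXT (i : Fin rA') (j : Fin mB) (k : Fin mA) :
    bform (sZC HAbar HBbar i j : MQ A mA mB rA' rB' → ZMod 2) (SXT HAbar ιA ℓ k)
      = if ℓ = j then HAbar i k else 0 := by
  rw [bform_SXT]; simp [sZC]

lemma bform_sXC_onA (i : Fin mA) (j : Fin rB') (w : A → ZMod 2) :
    bform (sXC HAbar HBbar i j : MQ A mA mB rA' rB' → ZMod 2) (onA w) = 0 := by
  rw [bform_onA]; simp [sXC]

lemma bform_sXC_eT (i : Fin mA) (j : Fin rB') (k : Fin rA') :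
    bform (sXC HAbar HBbar i j : MQ A mA mB rA' rB' → ZMod 2) (eT k) = 0 := by
  rw [bform_eT]; simp [sXC]

lemma bform_sXC_sZC (i : Fin mA) (j : Fin rB') (k : Fin rA') (m : Fin mB) :
    bform (sXC HAbar HBbar i j : MQ A mA mB rA' rB' → ZMod 2) (sZC HAbar HBbar k m) = 0 := by
  rw [bform_comm]; exact bform_sZC_sXC HAbar HBbar k m i j

end Stab
section StabMem
set_option linter.unusedSectionVars false
open Sum Finset

variable {A : Type} [Fintype A] [DecidableEq A] {rXA rZA mA mB rA' rB' : ℕ}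
  (HXA : Matrix (Fin rXA) A (ZMod 2)) (HZA : Matrix (Fin rZA) A (ZMod 2))
  (HAbar : Matrix (Fin rA') (Fin mA) (ZMod 2)) (HBbar : Matrix (Fin rB') (Fin mB) (ZMod 2))
  (ιA : Fin mA → A) (ρ : Fin rA' → Fin rZA) (ℓ : Fin mB) (zA0 : A → ZMod 2)

/-- rows of `H_Z^A` not meeting `Ā` are in `S_Z`. -/
lemma szelem₁ (hOrthA : HXA * HZA.transpose = 0) (j : Fin rZA)
    (hj : ∀ k, HZA j (ιA k) = 0) :
    (onA (HZA j) : MQ A mA mB rA' rB' → ZMod 2) ∈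
      SZstab HXA HZA HAbar HBbar ιA ρ ℓ zA0 := by
  refine ⟨mem_GZ₁ HZA HAbar HBbar ρ ℓ zA0 j, ?_⟩
  apply orth_GX
  · exact fun r => bform_onAZ_onAX HXA HZA hOrthA j r
  · exact fun p => bform_onA_sXC HAbar HBbar _ p.1 p.2
  · intro i
    rw [bform_onA_SXT]
    exact hj i

/-- `z^A_i + e_{T(i)} ∈ S_Z`. -/
lemma szelem₂ (hOrthA : HXA * HZA.transpose = 0)
    (hHAbar : ∀ i k, HAbar i k = HZA (ρ i) (ιA k)) (i : Fin rA') :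
    (onA (HZA (ρ i)) + eT i : MQ A mA mB rA' rB' → ZMod 2) ∈
      SZstab HXA HZA HAbar HBbar ιA ρ ℓ zA0 := by
  refine ⟨mem_GZ₃ HZA HAbar HBbar ρ ℓ zA0 i, ?_⟩
  apply orth_GX
  · intro r
    rw [bform_add_left, bform_onAZ_onAX HXA HZA hOrthA, bform_eT_onA, add_zero]
  · intro p
    rw [bform_add_left, bform_onA_sXC, bform_eT_sXC, add_zero]
  · intro k
    rw [bform_add_left, bform_onA_SXT, bform_eT_SXT, ← hHAbar]
    exact z2_add_self _

/-- `s^Z_{i,j}` for `j ≠ ℓ` is in `S_Z`. -/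
lemma szelem₃ (i : Fin rA') (j : Fin mB) (hj : j ≠ ℓ) :
    (sZC HAbar HBbar i j : MQ A mA mB rA' rB' → ZMod 2) ∈
      SZstab HXA HZA HAbar HBbar ιA ρ ℓ zA0 := by
  refine ⟨mem_GZ₂ HZA HAbar HBbar ρ ℓ zA0 i j, ?_⟩
  apply orth_GX
  · exact fun r => bform_sZC_onA HAbar HBbar i j _
  · exact fun p => bform_sZC_sXC HAbar HBbar i j p.1 p.2
  · intro k
    rw [bform_sZC_SXT, if_neg (fun h => hj h.symm)]

/-- `s^Z_{i,ℓ} + e_{T(i)} ∈ S_Z`. -/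
lemma szelem₄ (i : Fin rA') :
    (sZC HAbar HBbar i ℓ + eT i : MQ A mA mB rA' rB' → ZMod 2) ∈
      SZstab HXA HZA HAbar HBbar ιA ρ ℓ zA0 := by
  refine ⟨mem_GZ₄ HZA HAbar HBbar ρ ℓ zA0 i, ?_⟩
  apply orth_GX
  · intro r
    rw [bform_add_left, bform_sZC_onA, bform_eT_onA, add_zero]
  · intro p
    rw [bform_add_left, bform_sZC_sXC, bform_eT_sXC, add_zero]
  · intro k
    rw [bform_add_left, bform_sZC_SXT, bform_eT_SXT, if_pos rfl]
    exact z2_add_self _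

/-- rows of `H_X^A` are in `S_X`. -/
lemma sxelem₁ (hOrthA : HXA * HZA.transpose = 0) (hzA0ker : HXA.mulVec zA0 = 0)
    (r : Fin rXA) :
    (onA (HXA r) : MQ A mA mB rA' rB' → ZMod 2) ∈
      SXstab HXA HZA HAbar HBbar ιA ρ ℓ zA0 := by
  have honAz : ∀ j : Fin rZA,
      bform (onA (HXA r) : MQ A mA mB rA' rB' → ZMod 2) (onA (HZA j)) = 0 := by
    intro j
    rw [bform_onA]
    have := congrFun (congrFun hOrthA r) j
    simpa [onA, Matrix.mul_apply] using this
  refine ⟨mem_GX₁ HXA HAbar HBbar ιA ℓ r, ?_⟩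
  apply orth_GZ
  · exact honAz
  · exact fun p => by
      rw [bform_sZC]; simp [onA]
  · intro i
    rw [bform_add_right, honAz, bform_onA_eT, add_zero]
  · intro i
    rw [bform_add_right, bform_onA_eT, add_zero]
    rw [bform_sZC]; simp [onA]
  · rw [bform_onA]
    have := congrFun hzA0ker r
    simpa [onA, Matrix.mulVec, dotProduct] using this

/-- rows of `H_X^C` are in `S_X`. -/
lemma sxelem₂ (i : Fin mA) (j : Fin rB') :
    (sXC HAbar HBbar i j : MQ A mA mB rA' rB' → ZMod 2) ∈
      SXstab HXA HZA HAbar HBbar ιA ρ ℓ zA0 := by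
  refine ⟨mem_GX₂ HXA HAbar HBbar ιA ℓ i j, ?_⟩
  apply orth_GZ
  · intro s
    rw [bform_onA]; simp [sXC]
  · exact fun p => bform_sXC_sZC HAbar HBbar i j p.1 p.2
  · intro k
    rw [bform_add_right, bform_sXC_eT, add_zero, bform_onA]; simp [sXC]
  · intro k
    rw [bform_add_right, bform_sXC_eT, add_zero]
    exact bform_sXC_sZC HAbar HBbar i j k ℓ
  · rw [bform_onA]; simp [sXC]

end StabMem
section Count
open Finset

lemma card_filter_le_of_inj {α β : Type} [Fintype α] [Fintype β] [DecidableEq β]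
    (p : α → Prop) [DecidablePred p] (q : β → Prop) [DecidablePred q]
    (f : α → β) (hf : Function.Injective f) (h : ∀ a, p a → q (f a)) :
    (Finset.univ.filter p).card ≤ (Finset.univ.filter q).card := by
  apply Finset.card_le_card_of_injOn f
  · intro a ha
    simp only [Finset.coe_filter, Finset.mem_filter, Finset.mem_univ, true_and, Set.mem_setOf_eq] at *
    exact h a ha
  · exact fun a _ b _ hab => hf hab

lemma card_filter_add_le {α β γ : Type} [Fintype α] [Fintype β] [Fintype γ] [DecidableEq γ]
    (p : α → Prop) [DecidablePred p] (q : β → Prop) [DecidablePred q]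
    (r : γ → Prop) [DecidablePred r]
    (f : α → γ) (g : β → γ) (hf : Function.Injective f) (hg : Function.Injective g)
    (hfg : ∀ a b, f a ≠ g b)
    (hfp : ∀ a, p a → r (f a)) (hgq : ∀ b, q b → r (g b)) :
    (Finset.univ.filter p).card + (Finset.univ.filter q).card
      ≤ (Finset.univ.filter r).card := by
  classical
  have hdisj : Disjoint ((Finset.univ.filter p).image f) ((Finset.univ.filter q).image g) := by
    rw [Finset.disjoint_left]
    intro x hx hy
    simp only [Finset.mem_image] at hx hy
    obtain ⟨a, -, rfl⟩ := hx
    obtain ⟨b, -, hb⟩ := hy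
    exact hfg a b hb.symm
  have hsub : ((Finset.univ.filter p).image f) ∪ ((Finset.univ.filter q).image g)
      ⊆ Finset.univ.filter r := by
    intro x hx
    simp only [Finset.mem_union, Finset.mem_image, Finset.mem_filter, Finset.mem_univ,
      true_and] at *
    rcases hx with ⟨a, ha, rfl⟩ | ⟨b, hb, rfl⟩
    · exact hfp a ha
    · exact hgq b hb
  calc (Finset.univ.filter p).card + (Finset.univ.filter q).card
      = ((Finset.univ.filter p).image f).card + ((Finset.univ.filter q).image g).card := by
        rw [Finset.card_image_of_injective _ hf, Finset.card_image_of_injective _ hg]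
    _ = (((Finset.univ.filter p).image f) ∪ ((Finset.univ.filter q).image g)).card := by
        rw [Finset.card_union_of_disjoint hdisj]
    _ ≤ _ := Finset.card_le_card hsub

lemma wt_add_le {ι : Type} [Fintype ι] (u v : ι → ZMod 2) : wt (u + v) ≤ wt u + wt v := by
  classical
  unfold wt
  refine le_trans (Finset.card_le_card ?_) (Finset.card_union_le _ _)
  intro i hi
  simp only [Finset.mem_filter, Finset.mem_univ, true_and, Finset.mem_union,
    Pi.add_apply] at *
  by_contra hcon
  push_neg at hcon
  rw [hcon.1, hcon.2, add_zero] at hi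
  exact hi rfl

end Count

section LinAlg
open Finset

variable {r m : ℕ}

lemma mulVec_apply' {α β : Type} [Fintype β] (M : Matrix α β (ZMod 2)) (v : β → ZMod 2)
    (i : α) : M.mulVec v i = ∑ j, M i j * v j := rfl

/-- If `ker Nᵀ = 0` then `N.mulVec` is surjective. -/
lemma surj_of_kerT (N : Matrix (Fin r) (Fin m) (ZMod 2))
    (h : {v : Fin r → ZMod 2 | N.transpose.mulVec v = 0} = {0}) :
    Function.Surjective N.mulVec := by
  have hker : LinearMap.ker N.transpose.mulVecLin = ⊥ := by
    rw [Submodule.eq_bot_iff]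
    intro v hv
    have : v ∈ {v : Fin r → ZMod 2 | N.transpose.mulVec v = 0} := hv
    rw [h] at this
    exact this
  have hinj : Function.Injective N.transpose.mulVecLin := by
    rw [← LinearMap.ker_eq_bot]; exact hker
  have hrankT : N.transpose.rank = r := by
    rw [Matrix.rank]
    rw [LinearMap.finrank_range_of_inj hinj]
    simp [Module.finrank_pi]
  have hrank : N.rank = r := by rw [← Matrix.rank_transpose]; exact hrankT
  have htop : LinearMap.range N.mulVecLin = ⊤ := by
    apply Submodule.eq_top_of_finrank_eq
    rw [← Matrix.rank]
    rw [hrank, Module.finrank_pi]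
    simp
  intro g
  have : g ∈ LinearMap.range N.mulVecLin := by rw [htop]; trivial
  obtain ⟨u, hu⟩ := this
  exact ⟨u, by simpa [Matrix.mulVecLin_apply] using hu⟩

/-- Sum of the entries of `Nᵀ u` vanishes when `N 𝟙 = 0`. -/
lemma sum_mulVecT (N : Matrix (Fin r) (Fin m) (ZMod 2))
    (h1 : N.mulVec (fun _ => 1) = 0) (u : Fin r → ZMod 2) :
    ∑ l, N.transpose.mulVec u l = 0 := by
  simp only [mulVec_apply', Matrix.transpose_apply]
  rw [Finset.sum_comm]
  have : ∀ j, ∑ l, N j l * u j = 0 := by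
    intro j
    rw [← Finset.sum_mul]
    have := congrFun h1 j
    simp only [mulVec_apply', mul_one, Pi.zero_apply] at this
    rw [this, zero_mul]
  simp only [this, Finset.sum_const_zero]

/-- Decomposition: with `ker N = {0, 𝟙}` and `ker Nᵀ = 0`, every vector is
`c·e_ℓ + Nᵀ u`. -/
lemma decomp_eVec (N : Matrix (Fin r) (Fin m) (ZMod 2)) (ℓ : Fin m)
    (hker : {v : Fin m → ZMod 2 | N.mulVec v = 0} = {0, fun _ => 1})
    (f : Fin m → ZMod 2) :
    ∃ (c : ZMod 2) (u : Fin r → ZMod 2),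
      f = c • (fun l => if l = ℓ then (1 : ZMod 2) else 0) + N.transpose.mulVec u := by
  classical
  have h1 : N.mulVec (fun _ => 1) = 0 := by
    have : (fun _ => (1 : ZMod 2)) ∈ {v : Fin m → ZMod 2 | N.mulVec v = 0} := by
      rw [hker]; right; rfl
    exact this
  set eℓ : Fin m → ZMod 2 := fun l => if l = ℓ then 1 else 0 with heℓ
  have hone_ne : (fun _ => (1 : ZMod 2)) ≠ (0 : Fin m → ZMod 2) := by
    intro hcon
    have := congrFun hcon ℓ
    simp at this
  have hkerspan : LinearMap.ker N.mulVecLin = Submodule.span (ZMod 2) {(fun _ => 1 : Fin m → ZMod 2)} := by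
    ext v
    rw [LinearMap.mem_ker, Submodule.mem_span_singleton]
    constructor
    · intro hv
      have : v ∈ {v : Fin m → ZMod 2 | N.mulVec v = 0} := by
        simpa [Matrix.mulVecLin_apply] using hv
      rw [hker] at this
      rcases this with h | h
      · exact ⟨0, by simp [h]⟩
      · exact ⟨1, by simpa using h.symm⟩
    · rintro ⟨c, rfl⟩
      rcases z2_cases c with rfl | rfl
      · simp
      · simpa [Matrix.mulVecLin_apply] using h1
  have hkerrank : Module.finrank (ZMod 2) (LinearMap.ker N.mulVecLin) = 1 := by
    rw [hkerspan]
    exact finrank_span_singleton hone_ne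
  have hrn := LinearMap.finrank_range_add_finrank_ker (N.mulVecLin)
  rw [hkerrank, Module.finrank_pi] at hrn
  simp only [Fintype.card_fin] at hrn
  -- range of Nᵀ has finrank m - 1
  have hrangeT : Module.finrank (ZMod 2) (LinearMap.range N.transpose.mulVecLin)
      + 1 = m := by
    have : N.transpose.rank = N.rank := Matrix.rank_transpose N
    rw [Matrix.rank, Matrix.rank] at this
    rw [this]
    exact hrn
  -- e_ℓ not in range of Nᵀ
  have heℓnot : eℓ ∉ LinearMap.range N.transpose.mulVecLin := by
    rintro ⟨u, hu⟩
    have hsum := sum_mulVecT N h1 u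
    have : ∑ l, eℓ l = (1 : ZMod 2) := by
      simp [heℓ]
    rw [← hu] at this
    simp only [Matrix.mulVecLin_apply] at this
    rw [hsum] at this
    exact one_ne_zero this.symm
  set W := LinearMap.range N.transpose.mulVecLin ⊔ Submodule.span (ZMod 2) {eℓ} with hW
  have hlt : LinearMap.range N.transpose.mulVecLin < W := by
    rw [lt_iff_le_and_ne]
    refine ⟨le_sup_left, ?_⟩
    intro hcon
    apply heℓnot
    rw [hcon]
    exact Submodule.mem_sup_right (Submodule.mem_span_singleton_self eℓ)
  have hWrank : Module.finrank (ZMod 2) W = m := by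
    have hlt' := Submodule.finrank_lt_finrank_of_lt hlt
    have hle : Module.finrank (ZMod 2) W ≤ m := by
      have := Submodule.finrank_le W
      rwa [Module.finrank_pi, Fintype.card_fin] at this
    omega
  have hWtop : W = ⊤ := by
    apply Submodule.eq_top_of_finrank_eq
    rw [hWrank, Module.finrank_pi, Fintype.card_fin]
  have hf : f ∈ W := by rw [hWtop]; trivial
  rw [hW, Submodule.mem_sup] at hf
  obtain ⟨y, hy, z, hz, hyz⟩ := hf
  rw [Submodule.mem_span_singleton] at hz
  obtain ⟨c, rfl⟩ := hz
  obtain ⟨u, hu⟩ := hy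
  refine ⟨c, u, ?_⟩
  rw [← hyz, ← hu]
  simp only [Matrix.mulVecLin_apply]
  rw [add_comm]

end LinAlg
section OnAL
open Sum
set_option linter.unusedSectionVars false

variable {A : Type} [Fintype A] [DecidableEq A] {mA mB rA' rB' : ℕ}

/-- `onA` as a linear map. -/
def onAL : (A → ZMod 2) →ₗ[ZMod 2] (MQ A mA mB rA' rB' → ZMod 2) where
  toFun := onA
  map_add' u v := by
    funext q
    cases q with
    | inl a => rfl
    | inr q' => simp [onA]
  map_smul' c u := by
    funext q
    cases q with
    | inl a => rfl
    | inr q' => simp [onA]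

lemma onA_mem_span {n : ℕ} {H : Matrix (Fin n) A (ZMod 2)} {h : A → ZMod 2}
    (hh : h ∈ rowSpan H) {S : Set (MQ A mA mB rA' rB' → ZMod 2)}
    (hsub : (Set.range fun i => (onA (H i) : MQ A mA mB rA' rB' → ZMod 2)) ⊆ S) :
    (onA h : MQ A mA mB rA' rB' → ZMod 2) ∈ Submodule.span (ZMod 2) S := by
  have hmap := Submodule.mem_map_of_mem (f := (onAL : (A → ZMod 2) →ₗ[ZMod 2] (MQ A mA mB rA' rB' → ZMod 2))) hh
  rw [rowSpan, Submodule.map_span] at hmap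
  have him : (onAL : (A → ZMod 2) →ₗ[ZMod 2] (MQ A mA mB rA' rB' → ZMod 2)) ''
      (Set.range fun i => fun j => H i j)
      = Set.range fun i => (onA (H i) : MQ A mA mB rA' rB' → ZMod 2) := by
    rw [← Set.range_comp]
    rfl
  rw [him] at hmap
  exact Submodule.span_mono hsub hmap

lemma sum_decomp {r m : ℕ} (N : Matrix (Fin r) (Fin m) (ZMod 2)) (ℓ : Fin m)
    (h1 : N.mulVec (fun _ => 1) = 0) {f : Fin m → ZMod 2} {c : ZMod 2} {u : Fin r → ZMod 2}
    (hf : f = c • (fun l => if l = ℓ then (1 : ZMod 2) else 0) + N.transpose.mulVec u) :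
    ∑ l, f l = c := by
  rw [hf]
  simp only [Pi.add_apply, Pi.smul_apply, smul_eq_mul]
  rw [Finset.sum_add_distrib, sum_mulVecT N h1 u, add_zero]
  simp [Finset.mul_sum, mul_ite]

end OnAL
section VZside
set_option linter.unusedSectionVars false
open Sum Finset

variable {A : Type} [Fintype A] [DecidableEq A] {rXA rZA mA mB rA' rB' : ℕ}
  (HXA : Matrix (Fin rXA) A (ZMod 2)) (HZA : Matrix (Fin rZA) A (ZMod 2))
  (HAbar : Matrix (Fin rA') (Fin mA) (ZMod 2)) (HBbar : Matrix (Fin rB') (Fin mB) (ZMod 2))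
  (ιA : Fin mA → A) (ρ : Fin rA' → Fin rZA) (ℓ : Fin mB) (zA0 : A → ZMod 2)

lemma vZ_in_GZ (hOrthA : HXA * HZA.transpose = 0) (hzA0ker : HXA.mulVec zA0 = 0)
    (hkerB : {v : Fin mB → ZMod 2 | HBbar.mulVec v = 0} = {0, fun _ => 1})
    (hkerBT : {v : Fin rB' → ZMod 2 | HBbar.transpose.mulVec v = 0} = {0})
    (vZ : MQ A mA mB rA' rB' → ZMod 2)
    (hvZ : ∀ x ∈ SXstab HXA HZA HAbar HBbar ιA ρ ℓ zA0, bform vZ x = 0)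
    (hzAmem : (fun a => vZ (inl a)) ∈ rowSpan HZA)
    (hcol : ∃ l0 : Fin mB, ∀ i, vZ (inr (inl (i, l0))) = 0) :
    vZ ∈ GZgauge HZA HAbar HBbar ρ ℓ zA0 := by
  classical
  have e2 : ∀ (i : Fin mA) (j : Fin rB'),
      (∑ l, vZ (inr (inl (i, l))) * HBbar j l)
        + (∑ k, vZ (inr (inr (inl (k, j)))) * HAbar k i) = 0 := by
    intro i j
    have := hvZ _ (sxelem₂ HXA HZA HAbar HBbar ιA ρ ℓ zA0 i j)
    rwa [bform_sXC] at this
  have hsurj := surj_of_kerT HBbar hkerBT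
  choose M hM using fun k : Fin rA' => hsurj (fun j => vZ (inr (inr (inl (k, j)))))
  set F'' : Fin mA → Fin mB → ZMod 2 :=
    fun i l => vZ (inr (inl (i, l))) + ∑ k, HAbar k i * M k l with hF''
  have hF''ker : ∀ i, HBbar.mulVec (F'' i) = 0 := by
    intro i
    funext j
    rw [mulVec_apply']
    have expand : ∀ l, HBbar j l * F'' i l
        = vZ (inr (inl (i, l))) * HBbar j l + HBbar j l * (∑ k, HAbar k i * M k l) := by
      intro l
      rw [hF'']
      ring
    rw [Finset.sum_congr rfl (fun l _ => expand l), Finset.sum_add_distrib]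
    have h2 : ∑ l, HBbar j l * (∑ k, HAbar k i * M k l)
        = ∑ k, vZ (inr (inr (inl (k, j)))) * HAbar k i := by
      calc ∑ l, HBbar j l * (∑ k, HAbar k i * M k l)
          = ∑ l, ∑ k, HAbar k i * (HBbar j l * M k l) := by
            refine Finset.sum_congr rfl fun l _ => ?_
            rw [Finset.mul_sum]
            exact Finset.sum_congr rfl fun k _ => by ring
        _ = ∑ k, ∑ l, HAbar k i * (HBbar j l * M k l) := Finset.sum_comm
        _ = ∑ k, HAbar k i * (HBbar.mulVec (M k) j) := by
            refine Finset.sum_congr rfl fun k _ => ?_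
            rw [mulVec_apply', Finset.mul_sum]
        _ = ∑ k, vZ (inr (inr (inl (k, j)))) * HAbar k i := by
            refine Finset.sum_congr rfl fun k _ => ?_
            rw [hM k]
            ring
    rw [h2]
    exact e2 i j
  have hconst : ∀ i l, F'' i l = F'' i ℓ := by
    intro i l
    have : F'' i ∈ ({v : Fin mB → ZMod 2 | HBbar.mulVec v = 0}) := hF''ker i
    rw [hkerB] at this
    rcases this with h | h
    · rw [show F'' i = 0 from h]; rfl
    · rw [show F'' i = (fun _ => 1) from h]
  obtain ⟨l0, hl0⟩ := hcol
  have hs' : ∀ k, F'' k ℓ = ∑ i, HAbar i k * M i l0 := by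
    intro k
    rw [← hconst k l0, hF'']
    simp only [hl0 k, zero_add]
  -- representation of vZ
  have hrepr : vZ = onA (fun a => vZ (inl a))
      + (∑ p : Fin rA' × Fin mB, (M p.1 l0 + M p.1 p.2) • sZC HAbar HBbar p.1 p.2)
      + (∑ i, vZ (inr (inr (inr i))) • eT i) := by
    have h1B : HBbar.mulVec (fun _ => 1) = 0 := by
      have : (fun _ => (1 : ZMod 2)) ∈ {v : Fin mB → ZMod 2 | HBbar.mulVec v = 0} := by
        rw [hkerB]; right; rfl
      exact this
    funext q
    simp only [Pi.add_apply, Finset.sum_apply, Pi.smul_apply, smul_eq_mul]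
    cases q with
    | inl a => simp [onA, sZC, eT]
    | inr q' =>
      cases q' with
      | inl p =>
        obtain ⟨k, l⟩ := p
        simp only [onA, eT, sZC, Fintype.sum_prod_type, mul_ite, mul_zero,
          Finset.sum_ite_eq, Finset.sum_ite_eq', Finset.mem_univ, if_true,
          Finset.sum_const_zero, add_zero, zero_add, mul_one]
        -- goal now should be: vZ (VV (k,l)) = ∑ i, (M i l0 + M i l) * HAbar i k
        have key : ∑ i, (M i l0 + M i l) * HAbar i k = vZ (inr (inl (k, l))) := by
          have expand : ∀ i, (M i l0 + M i l) * HAbar i k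
              = HAbar i k * M i l0 + HAbar i k * M i l := by intro i; ring
          rw [Finset.sum_congr rfl fun i _ => expand i, Finset.sum_add_distrib]
          rw [← hs' k, ← hconst k l]
          rw [hF'']
          have : ∀ x : ZMod 2, ∀ y : ZMod 2, (y + x) + x = y := by
            intro x y; rw [add_assoc, z2_add_self, add_zero]
          exact this _ _
        rw [key]
      | inr q'' =>
        cases q'' with
        | inl p =>
          obtain ⟨k, l⟩ := p
          simp only [onA, eT, sZC, Fintype.sum_prod_type, mul_ite, mul_zero, ite_mul,
            zero_mul, Finset.sum_const_zero, add_zero, zero_add, mul_one]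
          rw [Finset.sum_comm]
          simp only [Finset.sum_ite_eq, Finset.mem_univ, if_true]
          -- goal: vZ (CC (k,l)) = ∑ j, (M k l0 + M k j) * HBbar l j
          have key : ∑ j, (M k l0 + M k j) * HBbar l j = vZ (inr (inr (inl (k, l)))) := by
            have expand : ∀ j, (M k l0 + M k j) * HBbar l j
                = M k l0 * HBbar l j + HBbar l j * M k j := by intro j; ring
            rw [Finset.sum_congr rfl fun j _ => expand j, Finset.sum_add_distrib]
            have hz : ∑ j, M k l0 * HBbar l j = 0 := by
              rw [← Finset.mul_sum]
              have := congrFun h1B l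
              rw [mulVec_apply'] at this
              simp only [mul_one, Pi.zero_apply] at this
              rw [this, mul_zero]
            rw [hz, zero_add]
            have := congrFun (hM k) l
            rw [mulVec_apply'] at this
            rw [this]
          exact key.symm
        | inr i =>
          simp [onA, eT, sZC]
  rw [hrepr]
  refine Submodule.add_mem _ (Submodule.add_mem _ ?_ ?_) ?_
  · refine onA_mem_span hzAmem ?_
    rintro g ⟨r, rfl⟩
    left; left; left; left
    exact ⟨r, rfl⟩
  · exact Submodule.sum_mem _ fun p _ =>
      Submodule.smul_mem _ _ (mem_GZ₂ HZA HAbar HBbar ρ ℓ zA0 p.1 p.2)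
  · exact Submodule.sum_mem _ fun i _ =>
      Submodule.smul_mem _ _ (mem_GZ_eT HZA HAbar HBbar ρ ℓ zA0 i)

end VZside
section VXside
set_option linter.unusedSectionVars false
open Sum Finset

variable {A : Type} [Fintype A] [DecidableEq A] {rXA rZA mA mB rA' rB' : ℕ}
  (HXA : Matrix (Fin rXA) A (ZMod 2)) (HZA : Matrix (Fin rZA) A (ZMod 2))
  (HAbar : Matrix (Fin rA') (Fin mA) (ZMod 2)) (HBbar : Matrix (Fin rB') (Fin mB) (ZMod 2))
  (ιA : Fin mA → A) (ρ : Fin rA' → Fin rZA) (ℓ : Fin mB) (zA0 : A → ZMod 2)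
  (xA : A → ZMod 2)

lemma vX_decomp (hOrthA : HXA * HZA.transpose = 0)
    (hιrange : ∀ a, xA a ≠ 0 ↔ ∃ k, ιA k = a)
    (hρrange : ∀ j, (∃ a, xA a ≠ 0 ∧ HZA j a ≠ 0) ↔ ∃ i, ρ i = j)
    (hHAbar : ∀ i k, HAbar i k = HZA (ρ i) (ιA k))
    (hkerB : {v : Fin mB → ZMod 2 | HBbar.mulVec v = 0} = {0, fun _ => 1})
    (hkerBT : {v : Fin rB' → ZMod 2 | HBbar.transpose.mulVec v = 0} = {0})
    (vX : MQ A mA mB rA' rB' → ZMod 2)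
    (hvX : ∀ z ∈ SZstab HXA HZA HAbar HBbar ιA ρ ℓ zA0, bform vX z = 0) :
    ∃ s : Fin mA → ZMod 2,
      (∀ k, s k ≠ 0 → ∃ l, vX (inr (inl (k, l))) ≠ 0) ∧
      HZA.mulVec (fun a => vX (inl a) + ∑ k, s k * (if ιA k = a then 1 else 0)) = 0 ∧
      ((fun a => vX (inl a) + ∑ k, s k * (if ιA k = a then 1 else 0)) ∈ rowSpan HXA →
        vX ∈ GXgauge HXA HAbar HBbar ιA ℓ) := by
  classical
  have h1B : HBbar.mulVec (fun _ => 1) = 0 := by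
    have : (fun _ => (1 : ZMod 2)) ∈ {v : Fin mB → ZMod 2 | HBbar.mulVec v = 0} := by
      rw [hkerB]; right; rfl
    exact this
  have hrowzero : ∀ j, (¬ ∃ i, ρ i = j) → ∀ k, HZA j (ιA k) = 0 := by
    intro j hj k
    by_contra hk
    exact hj ((hρrange j).mp ⟨ιA k, (hιrange (ιA k)).mpr ⟨k, rfl⟩, hk⟩)
  have c1 : ∀ j, (¬ ∃ i, ρ i = j) → ∑ a, vX (inl a) * HZA j a = 0 := by
    intro j hj
    have := hvX _ (szelem₁ HXA HZA HAbar HBbar ιA ρ ℓ zA0 hOrthA j (hrowzero j hj))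
    rwa [bform_onA] at this
  have c2 : ∀ i, (∑ a, vX (inl a) * HZA (ρ i) a) = vX (inr (inr (inr i))) := by
    intro i
    have := hvX _ (szelem₂ HXA HZA HAbar HBbar ιA ρ ℓ zA0 hOrthA hHAbar i)
    rw [bform_add_right, bform_onA, bform_eT] at this
    exact z2_cancel this
  have c34 : ∀ (i : Fin rA') (j : Fin mB),
      (∑ k, vX (inr (inl (k, j))) * HAbar i k)
        + (∑ l, vX (inr (inr (inl (i, l)))) * HBbar l j)
      = if j = ℓ then vX (inr (inr (inr i))) else 0 := by
    intro i j
    by_cases hj : j = ℓ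
    · subst hj
      rw [if_pos rfl]
      have := hvX _ (szelem₄ HXA HZA HAbar HBbar ιA ρ j zA0 i)
      rw [bform_add_right, bform_sZC, bform_eT] at this
      exact z2_cancel this
    · rw [if_neg hj]
      have := hvX _ (szelem₃ HXA HZA HAbar HBbar ιA ρ ℓ zA0 i j hj)
      rwa [bform_sZC] at this
  choose s N hFN using fun k : Fin mA =>
    decomp_eVec HBbar ℓ hkerB (fun l => vX (inr (inl (k, l))))
  have hW : ∀ (k : Fin mA) (j : Fin mB), (∑ m', HBbar m' j * N k m')
      = vX (inr (inl (k, j))) + s k * (if j = ℓ then (1 : ZMod 2) else 0) := by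
    intro k j
    have hFNj := congrFun (hFN k) j
    simp only [Pi.add_apply, Pi.smul_apply, smul_eq_mul] at hFNj
    have hmv : HBbar.transpose.mulVec (N k) j = ∑ m', HBbar m' j * N k m' := rfl
    rw [hmv] at hFNj
    rw [hFNj]
    exact (z2_aba _ _).symm
  have key : ∀ (i : Fin rA') (j : Fin mB),
      (∑ m', HBbar m' j * ((∑ k, HAbar i k * N k m') + vX (inr (inr (inl (i, m'))))))
        = (vX (inr (inr (inr i))) + ∑ k, HAbar i k * s k)
            * (if j = ℓ then (1 : ZMod 2) else 0) := by
    intro i j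
    calc ∑ m', HBbar m' j * ((∑ k, HAbar i k * N k m') + vX (inr (inr (inl (i, m')))))
        = (∑ m', ∑ k, HAbar i k * (HBbar m' j * N k m'))
          + ∑ m', vX (inr (inr (inl (i, m')))) * HBbar m' j := by
          rw [← Finset.sum_add_distrib]
          refine Finset.sum_congr rfl fun m' _ => ?_
          rw [mul_add, Finset.mul_sum]
          congr 1
          · exact Finset.sum_congr rfl fun k _ => by ring
          · ring
      _ = (∑ k, HAbar i k * (∑ m', HBbar m' j * N k m'))
          + ∑ m', vX (inr (inr (inl (i, m')))) * HBbar m' j := by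
          rw [Finset.sum_comm]
          congr 1
          exact Finset.sum_congr rfl fun k _ => (Finset.mul_sum _ _ _).symm
      _ = (∑ k, HAbar i k * (vX (inr (inl (k, j))) + s k * (if j = ℓ then (1 : ZMod 2) else 0)))
          + ∑ m', vX (inr (inr (inl (i, m')))) * HBbar m' j := by
          congr 1
          exact Finset.sum_congr rfl fun k _ => by rw [hW k j]
      _ = ((∑ k, vX (inr (inl (k, j))) * HAbar i k)
            + ∑ m', vX (inr (inr (inl (i, m')))) * HBbar m' j)
          + (∑ k, HAbar i k * s k) * (if j = ℓ then (1 : ZMod 2) else 0) := by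
          have expand : ∀ k, HAbar i k * (vX (inr (inl (k, j)))
                + s k * (if j = ℓ then (1 : ZMod 2) else 0))
              = vX (inr (inl (k, j))) * HAbar i k
                + (HAbar i k * s k) * (if j = ℓ then (1 : ZMod 2) else 0) := by
            intro k; ring
          rw [Finset.sum_congr rfl fun k _ => expand k, Finset.sum_add_distrib,
            ← Finset.sum_mul]
          ring
      _ = (if j = ℓ then vX (inr (inr (inr i))) else 0)
          + (∑ k, HAbar i k * s k) * (if j = ℓ then (1 : ZMod 2) else 0) := by
          rw [c34 i j]
      _ = (vX (inr (inr (inr i))) + ∑ k, HAbar i k * s k)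
          * (if j = ℓ then (1 : ZMod 2) else 0) := by
          by_cases hj : j = ℓ <;> simp [hj] <;> ring
  have keyfun : ∀ i : Fin rA',
      HBbar.transpose.mulVec (fun m' => (∑ k, HAbar i k * N k m')
          + vX (inr (inr (inl (i, m')))))
        = (vX (inr (inr (inr i))) + ∑ k, HAbar i k * s k)
            • (fun l => if l = ℓ then (1 : ZMod 2) else 0) := by
    intro i
    funext j
    simp only [Pi.smul_apply, smul_eq_mul]
    exact key i j
  have ht : ∀ i, vX (inr (inr (inr i))) = ∑ k, HAbar i k * s k := by
    intro i
    have hsum := sum_mulVecT HBbar h1B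
      (fun m' => (∑ k, HAbar i k * N k m') + vX (inr (inr (inl (i, m')))))
    rw [keyfun i] at hsum
    simp only [Pi.smul_apply, smul_eq_mul, mul_ite, mul_one, mul_zero,
      Finset.sum_ite_eq, Finset.sum_ite_eq', Finset.mem_univ, if_true] at hsum
    exact z2_cancel hsum
  have hG : ∀ (i : Fin rA') (m' : Fin rB'),
      (∑ k, HAbar i k * N k m') = vX (inr (inr (inl (i, m')))) := by
    intro i m'
    have hzero : HBbar.transpose.mulVec (fun m' => (∑ k, HAbar i k * N k m')
        + vX (inr (inr (inl (i, m'))))) = 0 := by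
      rw [keyfun i, ← ht i]
      rw [z2_add_self]
      exact zero_smul _ _
    have : (fun m' => (∑ k, HAbar i k * N k m') + vX (inr (inr (inl (i, m')))))
        ∈ {v : Fin rB' → ZMod 2 | HBbar.transpose.mulVec v = 0} := hzero
    rw [hkerBT] at this
    exact z2_cancel (congrFun this m')
  refine ⟨s, ?_, ?_, ?_⟩
  · intro k hk
    by_contra hcon
    push_neg at hcon
    apply hk
    have := sum_decomp HBbar ℓ h1B (hFN k)
    rw [← this]
    simp [hcon]
  · funext j
    rw [mulVec_apply']
    have expand : ∀ a, HZA j a * (vX (inl a) + ∑ k, s k * (if ιA k = a then 1 else 0))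
        = vX (inl a) * HZA j a
          + ∑ k, (if ιA k = a then s k * HZA j a else 0) := by
      intro a
      rw [mul_add, Finset.mul_sum]
      congr 1
      · ring
      · refine Finset.sum_congr rfl fun k _ => ?_
        by_cases h : ιA k = a <;> simp [h] <;> ring
    rw [Finset.sum_congr rfl fun a _ => expand a, Finset.sum_add_distrib, Finset.sum_comm]
    simp only [Finset.sum_ite_eq, Finset.mem_univ, if_true]
    by_cases hρ : ∃ i, ρ i = j
    · obtain ⟨i, rfl⟩ := hρ
      rw [c2 i]
      have : ∑ k, s k * HZA (ρ i) (ιA k) = ∑ k, HAbar i k * s k := by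
        refine Finset.sum_congr rfl fun k _ => ?_
        rw [hHAbar i k]; ring
      rw [this, ← ht i]
      exact z2_add_self _
    · rw [c1 j hρ]
      have : ∑ k, s k * HZA j (ιA k) = 0 := by
        refine Finset.sum_eq_zero fun k _ => ?_
        rw [hrowzero j hρ k, mul_zero]
      rw [this, add_zero]
      rfl
  · intro hrow
    have hrepr : vX = onA (fun a => vX (inl a) + ∑ k, s k * (if ιA k = a then 1 else 0))
        + (∑ k, s k • SXT HAbar ιA ℓ k)
        + (∑ p : Fin mA × Fin rB', N p.1 p.2 • sXC HAbar HBbar p.1 p.2) := by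
      funext q
      simp only [Pi.add_apply, Finset.sum_apply, Pi.smul_apply, smul_eq_mul, SXT]
      cases q with
      | inl a =>
        simp only [onA, eA, eVV, eT, sXC, Pi.add_apply, Finset.sum_apply,
          Pi.smul_apply, smul_eq_mul, mul_zero, Finset.sum_const_zero, add_zero,
          mul_ite, mul_one]
        have h1 : ∑ k, (if a = ιA k then s k else 0) = ∑ k, (if ιA k = a then s k else 0) := by
          refine Finset.sum_congr rfl fun k _ => ?_
          by_cases h : ιA k = a
          · rw [if_pos h, if_pos h.symm]
          · rw [if_neg h, if_neg fun hc => h hc.symm]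
        rw [h1]
        rw [add_assoc, z2_add_self, add_zero]
      | inr q' =>
        cases q' with
        | inl p =>
          obtain ⟨k, l⟩ := p
          simp only [onA, eA, eVV, eT, sXC, Pi.add_apply, Finset.sum_apply, Pi.smul_apply,
            smul_eq_mul, mul_zero, Finset.sum_const_zero, add_zero, zero_add, mul_ite,
            mul_one, ite_and, Fintype.sum_prod_type, Finset.sum_ite_irrel,
            Finset.sum_ite_eq, Finset.sum_ite_eq', Finset.mem_univ, if_true]
          have hx : ∑ j', N k j' * HBbar j' l = ∑ m', HBbar m' l * N k m' :=
            Finset.sum_congr rfl fun j' _ => mul_comm _ _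
          have hite : (if l = ℓ then s k else 0) = s k * (if l = ℓ then (1 : ZMod 2) else 0) := by
            by_cases hl : l = ℓ <;> simp [hl]
          rw [hx, hW k l, hite]
          exact (z2_helper1 _ _).symm
        | inr q'' =>
          cases q'' with
          | inl p =>
            obtain ⟨k, l⟩ := p
            simp only [onA, eA, eVV, eT, sXC, Pi.add_apply, Finset.sum_apply, Pi.smul_apply,
              smul_eq_mul, mul_zero, Finset.sum_const_zero, add_zero, zero_add, mul_ite,
              mul_one, ite_and, Fintype.sum_prod_type, Finset.sum_ite_irrel,
              Finset.sum_ite_eq, Finset.sum_ite_eq', Finset.mem_univ, if_true]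
            have hx : ∑ k', N k' l * HAbar k k' = ∑ k', HAbar k k' * N k' l :=
              Finset.sum_congr rfl fun k' _ => mul_comm _ _
            rw [hx, hG k l]
          | inr i =>
            simp only [onA, eA, eVV, eT, sXC, Pi.add_apply, Finset.sum_apply, Pi.smul_apply,
              smul_eq_mul, mul_zero, Finset.sum_const_zero, add_zero, zero_add, mul_ite,
              mul_one, ite_and, Fintype.sum_prod_type, Finset.sum_ite_irrel,
              Finset.sum_ite_eq, Finset.sum_ite_eq', Finset.mem_univ, if_true]
            rw [ht i]
            exact Finset.sum_congr rfl fun k _ => mul_comm _ _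
    rw [hrepr]
    refine Submodule.add_mem _ (Submodule.add_mem _ ?_ ?_) ?_
    · refine onA_mem_span hrow ?_
      rintro g ⟨r, rfl⟩
      left; left
      exact ⟨r, rfl⟩
    · exact Submodule.sum_mem _ fun k _ =>
        Submodule.smul_mem _ _ (mem_GX₃ HXA HAbar HBbar ιA ℓ k)
    · exact Submodule.sum_mem _ fun p _ =>
        Submodule.smul_mem _ _ (mem_GX₂ HXA HAbar HBbar ιA ℓ p.1 p.2)

end VXside
/-- Subsystem code distance for lattice-surgery merging: the dressed distance is at least
`min d_A d_B`, i.e. every Pauli operator `(v_X, v_Z)` commuting with the stabilizer group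
but lying outside the gauge group has weight at least `min d_A d_B`. -/
theorem merged_subsystem_dressed_distance
    {A : Type} [Fintype A] [DecidableEq A] {rXA rZA mA rA' : ℕ}
    (HXA : Matrix (Fin rXA) A (ZMod 2)) (HZA : Matrix (Fin rZA) A (ZMod 2))
    (hOrthA : HXA * HZA.transpose = 0)
    {B : Type} [Fintype B] [DecidableEq B] {rXB rZB mB rB' : ℕ}
    (HXB : Matrix (Fin rXB) B (ZMod 2)) (HZB : Matrix (Fin rZB) B (ZMod 2))
    (hOrthB : HXB * HZB.transpose = 0)
    (dA dB : ℕ)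
    (hdA : IsLeast {d : ℕ | ∃ v : A → ZMod 2,
      ((HZA.mulVec v = 0 ∧ v ∉ rowSpan HXA) ∨ (HXA.mulVec v = 0 ∧ v ∉ rowSpan HZA)) ∧
      wt v = d} dA)
    (hdB : IsLeast {d : ℕ | ∃ v : B → ZMod 2,
      ((HZB.mulVec v = 0 ∧ v ∉ rowSpan HXB) ∨ (HXB.mulVec v = 0 ∧ v ∉ rowSpan HZB)) ∧
      wt v = d} dB)
    (xA : A → ZMod 2) (hxAker : HZA.mulVec xA = 0) (hxAnl : xA ∉ rowSpan HXA)
    (hxAmin : ∀ v : A → ZMod 2, HZA.mulVec v = 0 → v ∉ rowSpan HXA → wt xA ≤ wt v)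
    (ιA : Fin mA → A) (hιinj : Function.Injective ιA)
    (hιrange : ∀ a, xA a ≠ 0 ↔ ∃ k, ιA k = a)
    (HAbar : Matrix (Fin rA') (Fin mA) (ZMod 2))
    (ρ : Fin rA' → Fin rZA) (hρinj : Function.Injective ρ)
    (hρrange : ∀ j, (∃ a, xA a ≠ 0 ∧ HZA j a ≠ 0) ↔ ∃ i, ρ i = j)
    (hHAbar : ∀ i k, HAbar i k = HZA (ρ i) (ιA k))
    (zB : B → ZMod 2) (hzBker : HXB.mulVec zB = 0) (hzBnl : zB ∉ rowSpan HZB)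
    (hzBmin : ∀ v : B → ZMod 2, HXB.mulVec v = 0 → v ∉ rowSpan HZB → wt zB ≤ wt v)
    (ιB : Fin mB → B) (hιBinj : Function.Injective ιB)
    (hιBrange : ∀ b, zB b ≠ 0 ↔ ∃ k, ιB k = b)
    (HBbar : Matrix (Fin rB') (Fin mB) (ZMod 2))
    (ρB : Fin rB' → Fin rXB) (hρBinj : Function.Injective ρB)
    (hρBrange : ∀ j, (∃ b, zB b ≠ 0 ∧ HXB j b ≠ 0) ↔ ∃ i, ρB i = j)
    (hHBbar : ∀ i k, HBbar i k = HXB (ρB i) (ιB k))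
    (hkerA : {v : Fin mA → ZMod 2 | HAbar.mulVec v = 0} = {0, fun _ => 1})
    (hkerB : {v : Fin mB → ZMod 2 | HBbar.mulVec v = 0} = {0, fun _ => 1})
    (hkerBT : {v : Fin rB' → ZMod 2 | HBbar.transpose.mulVec v = 0} = {0})
    (ℓ : Fin mB)
    (zA0 : A → ZMod 2) (hzA0ker : HXA.mulVec zA0 = 0) (hzA0nl : zA0 ∉ rowSpan HZA)
    (hzA0pair : bform zA0 xA = 1)
    : ∀ vX vZ : MQ A mA mB rA' rB' → ZMod 2,
      (∀ z ∈ SZstab HXA HZA HAbar HBbar ιA ρ ℓ zA0, bform vX z = 0) →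
      (∀ x ∈ SXstab HXA HZA HAbar HBbar ιA ρ ℓ zA0, bform vZ x = 0) →
      ¬(vX ∈ GXgauge HXA HAbar HBbar ιA ℓ ∧ vZ ∈ GZgauge HZA HAbar HBbar ρ ℓ zA0) →
      min dA dB ≤ (Finset.univ.filter fun q => vX q ≠ 0 ∨ vZ q ≠ 0).card := by
  classical
  intro vX vZ hvX hvZ hng
  by_contra hcard
  push_neg at hcard
  apply hng
  have hcdA : (Finset.univ.filter fun q => vX q ≠ 0 ∨ vZ q ≠ 0).card < dA :=
    lt_of_lt_of_le hcard (min_le_left _ _)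
  have hcdB : (Finset.univ.filter fun q => vX q ≠ 0 ∨ vZ q ≠ 0).card < dB :=
    lt_of_lt_of_le hcard (min_le_right _ _)
  constructor
  · -- vX ∈ 𝒢_X
    obtain ⟨s, hs0, hker, himp⟩ := vX_decomp HXA HZA HAbar HBbar ιA ρ ℓ zA0 xA hOrthA
      hιrange hρrange hHAbar hkerB hkerBT vX hvX
    apply himp
    by_contra hnot
    have hge : dA ≤ wt (fun a => vX (Sum.inl a) + ∑ k, s k * (if ιA k = a then 1 else 0)) :=
      hdA.2 ⟨_, Or.inl ⟨hker, hnot⟩, rfl⟩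
    have h1 : wt (fun a => vX (Sum.inl a) + ∑ k, s k * (if ιA k = a then 1 else 0))
        ≤ wt (fun a => vX (Sum.inl a))
          + wt (fun a : A => ∑ k, s k * (if ιA k = a then 1 else 0)) :=
      wt_add_le _ _
    have h2 : wt (fun a : A => ∑ k, s k * (if ιA k = a then 1 else 0))
        ≤ (Finset.univ.filter fun k : Fin mA => s k ≠ 0).card := by
      apply Finset.card_le_card_of_surjOn ιA
      intro a ha
      simp only [Finset.coe_filter, Finset.mem_univ, true_and, Set.mem_setOf_eq, wt] at ha
      have hex : ∃ k, ιA k = a ∧ s k ≠ 0 := by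
        by_contra hc
        push_neg at hc
        apply ha
        refine Finset.sum_eq_zero fun k _ => ?_
        by_cases h : ιA k = a
        · rw [if_pos h, mul_one, hc k h]
        · rw [if_neg h, mul_zero]
      obtain ⟨k, hk1, hk2⟩ := hex
      exact ⟨k, by simp [hk2], hk1⟩
    have h3 : (Finset.univ.filter fun k : Fin mA => s k ≠ 0).card
        ≤ (Finset.univ.filter fun p : Fin mA × Fin mB =>
            vX (Sum.inr (Sum.inl p)) ≠ 0).card := by
      apply Finset.card_le_card_of_surjOn Prod.fst
      intro k hk
      simp only [Finset.coe_filter, Finset.mem_univ, true_and, Set.mem_setOf_eq] at hk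
      obtain ⟨l, hl⟩ := hs0 k hk
      exact ⟨(k, l), by simp [hl], rfl⟩
    have h4 : wt (fun a => vX (Sum.inl a))
          + (Finset.univ.filter fun p : Fin mA × Fin mB =>
              vX (Sum.inr (Sum.inl p)) ≠ 0).card
        ≤ (Finset.univ.filter fun q => vX q ≠ 0 ∨ vZ q ≠ 0).card := by
      apply card_filter_add_le _ _ _ Sum.inl (fun p => Sum.inr (Sum.inl p))
      · exact Sum.inl_injective
      · exact fun p p' hpp => Sum.inl_injective (Sum.inr_injective hpp)
      · intro a b; simp
      · intro a ha; exact Or.inl ha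
      · intro p hp; exact Or.inl hp
    omega
  · -- vZ ∈ 𝒢_Z
    refine vZ_in_GZ HXA HZA HAbar HBbar ιA ρ ℓ zA0 hOrthA hzA0ker hkerB hkerBT vZ hvZ ?_ ?_
    · -- the A-part of vZ is a Z-stabilizer of code A
      have hkerZ : HXA.mulVec (fun a => vZ (Sum.inl a)) = 0 := by
        funext r
        have := hvZ _ (sxelem₁ HXA HZA HAbar HBbar ιA ρ ℓ zA0 hOrthA hzA0ker r)
        rw [bform_onA] at this
        rw [mulVec_apply']
        simp only [Pi.zero_apply]
        rw [← this]
        exact Finset.sum_congr rfl fun a _ => mul_comm _ _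
      by_contra hnot
      have hge : dA ≤ wt (fun a => vZ (Sum.inl a)) := hdA.2 ⟨_, Or.inr ⟨hkerZ, hnot⟩, rfl⟩
      have hle : wt (fun a => vZ (Sum.inl a))
          ≤ (Finset.univ.filter fun q => vX q ≠ 0 ∨ vZ q ≠ 0).card := by
        apply card_filter_le_of_inj _ _ Sum.inl Sum.inl_injective
        intro a ha
        exact Or.inr ha
      omega
    · -- some column of the VV-part of vZ vanishes
      by_contra hno
      push_neg at hno
      have h1 : mB ≤ (Finset.univ.filter fun p : Fin mA × Fin mB =>
          vZ (Sum.inr (Sum.inl p)) ≠ 0).card := by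
        have := Finset.card_le_card_of_surjOn (s := Finset.univ.filter fun p : Fin mA × Fin mB =>
            vZ (Sum.inr (Sum.inl p)) ≠ 0) (t := (Finset.univ : Finset (Fin mB))) Prod.snd ?_
        · simpa using this
        · intro l _
          obtain ⟨i, hi⟩ := hno l
          exact ⟨(i, l), by simp [hi], rfl⟩
      have h2 : (Finset.univ.filter fun p : Fin mA × Fin mB =>
            vZ (Sum.inr (Sum.inl p)) ≠ 0).card
          ≤ (Finset.univ.filter fun q => vX q ≠ 0 ∨ vZ q ≠ 0).card := by
        apply card_filter_le_of_inj _ _ (fun p => Sum.inr (Sum.inl p))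
        · exact fun p p' hpp => Sum.inl_injective (Sum.inr_injective hpp)
        · intro p hp; exact Or.inr hp
      have h3 : dB ≤ wt zB := hdB.2 ⟨zB, Or.inr ⟨hzBker, hzBnl⟩, rfl⟩
      have h4 : wt zB ≤ mB := by
        have := Finset.card_le_card_of_surjOn (s := (Finset.univ : Finset (Fin mB)))
            (t := Finset.univ.filter fun b => zB b ≠ 0) ιB ?_
        · simpa [wt] using this
        · intro b hb
          simp only [Finset.coe_filter, Finset.mem_univ, true_and, Set.mem_setOf_eq] at hb
          obtain ⟨k, hk⟩ := (hιBrange b).mp hb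
          exact ⟨k, by simp, hk⟩
      omega
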